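/- Let R be an associative ring with identity and n ≥ 3 an integer. Then the elementary group E_n(R) is generated by the set {e_{i,i+1}(r) : 1 ≤ i ≤ n−1, r ∈ R} ∪ {e_{n,1}(r) : r ∈ R}, i.e., by the elementary matrices along the superdiagonal together with those in position (n,1). -/

import Mathlib

open Matrix

namespace Paper

/-! ### Generalities -/

lemma one_add_mul_aux {M : Type*} [Ring M] {x y : M} (h1 : x + y = 0) (h2 : x * y = 0) :
    (1 + x) * (1 + y) = 1 := by
  have h : (1 + x) * (1 + y) = 1 + (x + y) + x * y := by noncomm_ring
  rw [h, h1, h2, add_zero, add_zero]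

/-- The group of self-homeomorphisms of a topological space, under composition. -/
instance homeomorphGroup (X : Type*) [TopologicalSpace X] : Group (X ≃ₜ X) where
  mul a b := b.trans a
  one := Homeomorph.refl X
  inv := Homeomorph.symm
  mul_assoc a b c := rfl
  one_mul a := Homeomorph.ext fun x => rfl
  mul_one a := Homeomorph.ext fun x => rfl
  inv_mul_cancel a := Homeomorph.ext fun x => a.symm_apply_apply x

section Elementary

variable (R : Type*) [Ring R]

lemma stdBasis_cancel (n : ℕ) (i j : Fin n) (a : R) :
    single i j a + single i j (-a) = 0 := by
  rw [← Matrix.single_add, add_neg_cancel, Matrix.single_zero]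

/-- The elementary matrix `e_{ij}(r) = 1 + r·E_{ij}` as an invertible matrix,
i.e. an element of `GL_n(R)`. -/
def elemGL (n : ℕ) (i j : Fin n) (hij : i ≠ j) (r : R) : (Matrix (Fin n) (Fin n) R)ˣ where
  val := 1 + single i j r
  inv := 1 + single i j (-r)
  val_inv := one_add_mul_aux (stdBasis_cancel R n i j r)
    (Matrix.single_mul_single_of_ne r i j _ (Ne.symm hij) (-r))
  inv_val := one_add_mul_aux
    (by have := stdBasis_cancel R n i j (-r); rwa [neg_neg] at this)
    (Matrix.single_mul_single_of_ne (-r) i j _ (Ne.symm hij) r)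

/-- The elementary group `E_n(R)`: the subgroup of `GL_n(R)` generated by all
elementary matrices. -/
def ElementaryGroup (n : ℕ) : Subgroup (Matrix (Fin n) (Fin n) R)ˣ :=
  Subgroup.closure { A | ∃ (i j : Fin n) (hij : i ≠ j) (r : R), A = elemGL R n i j hij r }

lemma elemGL_mem (n : ℕ) (i j : Fin n) (hij : i ≠ j) (r : R) :
    elemGL R n i j hij r ∈ ElementaryGroup R n :=
  Subgroup.subset_closure ⟨i, j, hij, r, rfl⟩

/-- The diagonal matrix with `-1` at places `i`, `j` and `1` elsewhere. -/
def negPairDiag (n : ℕ) (i j : Fin n) : Matrix (Fin n) (Fin n) R :=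
  Matrix.diagonal fun k => if k = i ∨ k = j then -1 else 1

lemma negPairDiag_mul_self (n : ℕ) (i j : Fin n) :
    negPairDiag R n i j * negPairDiag R n i j = 1 := by
  rw [negPairDiag, Matrix.diagonal_mul_diagonal]
  have h : (fun k => (if k = i ∨ k = j then (-1 : R) else 1) *
      (if k = i ∨ k = j then (-1 : R) else 1)) = fun _ => (1 : R) := by
    funext k
    by_cases h : k = i ∨ k = j <;> simp [h]
  rw [h, Matrix.diagonal_one]

/-- The matrix `negPairDiag` as an invertible matrix. -/
def negPairGL (n : ℕ) (i j : Fin n) : (Matrix (Fin n) (Fin n) R)ˣ :=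
  ⟨negPairDiag R n i j, negPairDiag R n i j,
    negPairDiag_mul_self R n i j, negPairDiag_mul_self R n i j⟩

/-- The matrix `A_{i,i+1}` (0-indexed: diagonal entries `i` and `i+1` equal `-1`). -/
def APair (n : ℕ) (i : Fin (n - 1)) : (Matrix (Fin n) (Fin n) R)ˣ :=
  negPairGL R n ⟨(i : ℕ), by have := i.isLt; omega⟩ ⟨(i : ℕ) + 1, by have := i.isLt; omega⟩

/-- `E_n(R, 2R)`: the smallest normal subgroup of `E_n(R)` containing all elementary
matrices `e_{ij}(s)` with `s ∈ 2R`. -/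
def RelElementaryGroup (n : ℕ) : Subgroup ↥(ElementaryGroup R n) :=
  Subgroup.normalClosure
    { x : ↥(ElementaryGroup R n) | ∃ (i j : Fin n) (hij : i ≠ j) (r : R),
        x.val = elemGL R n i j hij (2 * r) }

end Elementary

section Symplectic

variable (S : Type*) [CommRing S]

/-- The index involution `σ` on `{0, …, 2n-1}`: `σk = k + n` if `k < n`, else `σk = k - n`. -/
def sigIdx (n : ℕ) (k : Fin (2 * n)) : Fin (2 * n) :=
  if h : (k : ℕ) < n then ⟨(k : ℕ) + n, by omega⟩
  else ⟨(k : ℕ) - n, by have := k.isLt; omega⟩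

lemma sigIdx_ne (n : ℕ) (k : Fin (2 * n)) : sigIdx n k ≠ k := by
  have hk := k.isLt
  unfold sigIdx
  split_ifs with h <;>
    · intro hEq
      have h2 := congrArg Fin.val hEq
      simp only [Fin.val_mk] at h2 -- may need adjusting
      omega

lemma sigIdx_inj (n : ℕ) {k l : Fin (2 * n)} (h : k ≠ l) : sigIdx n k ≠ sigIdx n l := by
  have hk := k.isLt
  have hl := l.isLt
  have hkl : (k : ℕ) ≠ (l : ℕ) := fun hc => h (Fin.ext hc)
  unfold sigIdx
  split_ifs with h1 h2 h2 <;>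
    · intro hEq
      have h3 := congrArg Fin.val hEq
      simp only [Fin.val_mk] at h3
      omega

/-- The symplectic elementary matrix `ρ_{ij}(a)`, as a matrix.  When `j = σi` it is
`1 + a E_{i,σi}`; otherwise it is `1 + a E_{ij} - δ a E_{σj,σi}` where `δ = 1` if `i, j`
are on the same side of `n` and `δ = -1` otherwise. -/
def symElemMat (n : ℕ) (i j : Fin (2 * n)) (a : S) : Matrix (Fin (2 * n)) (Fin (2 * n)) S :=
  if j = sigIdx n i then 1 + single i j a
  else 1 + single i j a -
    single (sigIdx n j) (sigIdx n i)
      ((if ((i : ℕ) < n ↔ (j : ℕ) < n) then 1 else -1) * a)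

lemma symElemMat_mul_neg (n : ℕ) (i j : Fin (2 * n)) (hij : i ≠ j) (a : S) :
    symElemMat S n i j a * symElemMat S n i j (-a) = 1 := by
  unfold symElemMat
  set d : S := if ((i : ℕ) < n ↔ (j : ℕ) < n) then 1 else -1 with hd
  split_ifs with h
  · exact one_add_mul_aux (stdBasis_cancel S _ i j a)
      (Matrix.single_mul_single_of_ne a i j _ (Ne.symm hij) (-a))
  · rw [add_sub_assoc, add_sub_assoc]
    apply one_add_mul_aux
    · have c1 := stdBasis_cancel S _ i j a
      have c2 := stdBasis_cancel S _ (sigIdx n j) (sigIdx n i) (d * a)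
      rw [mul_neg]
      calc single i j a - single (sigIdx n j) (sigIdx n i) (d * a) +
            (single i j (-a) - single (sigIdx n j) (sigIdx n i) (-(d * a)))
          = (single i j a + single i j (-a)) -
            (single (sigIdx n j) (sigIdx n i) (d * a) +
              single (sigIdx n j) (sigIdx n i) (-(d * a))) := by abel
        _ = 0 := by rw [c1, c2, sub_zero]
    · simp only [sub_mul, mul_sub]
      rw [Matrix.single_mul_single_of_ne a i j _ (Ne.symm hij) (-a),
        Matrix.single_mul_single_of_ne a i j _ (Ne.symm (sigIdx_ne n j)) (d * -a),
        Matrix.single_mul_single_of_ne (d * a) (sigIdx n j) (sigIdx n i) _ (sigIdx_ne n i) (-a),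
        Matrix.single_mul_single_of_ne (d * a) (sigIdx n j) (sigIdx n i) _
          (sigIdx_inj n hij) (d * -a)]
      simp

/-- The symplectic elementary matrix `ρ_{ij}(a)` as an invertible matrix. -/
def symElemGL (n : ℕ) (i j : Fin (2 * n)) (hij : i ≠ j) (a : S) :
    (Matrix (Fin (2 * n)) (Fin (2 * n)) S)ˣ where
  val := symElemMat S n i j a
  inv := symElemMat S n i j (-a)
  val_inv := symElemMat_mul_neg S n i j hij a
  inv_val := by have := symElemMat_mul_neg S n i j hij (-a); rwa [neg_neg] at this

/-- The elementary symplectic group `Ep_{2n}(S)`, generated by all symplectic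
elementary matrices. -/
def EpGroup (n : ℕ) : Subgroup (Matrix (Fin (2 * n)) (Fin (2 * n)) S)ˣ :=
  Subgroup.closure
    { A | ∃ (i j : Fin (2 * n)) (hij : i ≠ j) (a : S), A = symElemGL S n i j hij a }

/-- The matrix `J = [[0, I_n], [-I_n, 0]]` of the standard symplectic form. -/
def Jmat (n : ℕ) : Matrix (Fin (2 * n)) (Fin (2 * n)) S :=
  Matrix.of fun i j =>
    if (i : ℕ) + n = (j : ℕ) then 1 else if (j : ℕ) + n = (i : ℕ) then -1 else 0

/-- The symplectic group `Sp_{2n}(S)`: invertible `2n × 2n` matrices `M` with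
`Mᵀ * J * M = J`. -/
def SpGroup (n : ℕ) : Subgroup (Matrix (Fin (2 * n)) (Fin (2 * n)) S)ˣ where
  carrier := { M | (↑M : Matrix (Fin (2 * n)) (Fin (2 * n)) S)ᵀ * Jmat S n * ↑M = Jmat S n }
  one_mem' := by simp
  mul_mem' := by
    intro a b ha hb
    show (Units.val (a * b))ᵀ * Jmat S n * Units.val (a * b) = Jmat S n
    rw [Units.val_mul, Matrix.transpose_mul]
    calc (↑b : Matrix (Fin (2*n)) (Fin (2*n)) S)ᵀ * (↑a : Matrix (Fin (2*n)) (Fin (2*n)) S)ᵀ *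
          Jmat S n * (↑a * ↑b)
        = (↑b : Matrix (Fin (2*n)) (Fin (2*n)) S)ᵀ *
            ((↑a : Matrix (Fin (2*n)) (Fin (2*n)) S)ᵀ * Jmat S n * ↑a) * ↑b := by
          noncomm_ring
      _ = (↑b : Matrix (Fin (2*n)) (Fin (2*n)) S)ᵀ * Jmat S n * ↑b := by rw [ha]
      _ = Jmat S n := hb
  inv_mem' := by
    intro a ha
    have ha' : (↑a : Matrix (Fin (2 * n)) (Fin (2 * n)) S)ᵀ * Jmat S n *
        (↑a : Matrix (Fin (2 * n)) (Fin (2 * n)) S) = Jmat S n := ha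
    show ((a⁻¹ : (Matrix (Fin (2 * n)) (Fin (2 * n)) S)ˣ) :
        Matrix (Fin (2 * n)) (Fin (2 * n)) S)ᵀ * Jmat S n *
        ((a⁻¹ : (Matrix (Fin (2 * n)) (Fin (2 * n)) S)ˣ) :
        Matrix (Fin (2 * n)) (Fin (2 * n)) S) = Jmat S n
    set A : Matrix (Fin (2 * n)) (Fin (2 * n)) S := ↑a with hA
    set B : Matrix (Fin (2 * n)) (Fin (2 * n)) S := ((a⁻¹ :
        (Matrix (Fin (2 * n)) (Fin (2 * n)) S)ˣ) : Matrix (Fin (2 * n)) (Fin (2 * n)) S) with hB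
    have h1 : A * B = 1 := a.mul_inv
    calc Bᵀ * Jmat S n * B
        = Bᵀ * (Aᵀ * Jmat S n * A) * B := by rw [ha']
      _ = (A * B)ᵀ * Jmat S n * (A * B) := by rw [Matrix.transpose_mul]; noncomm_ring
      _ = Jmat S n := by rw [h1]; simp

end Symplectic

section Extra

variable (R : Type*) [Ring R]

/-- Index of the `(2i-1)`-th row (1-indexed), i.e. `2i` 0-indexed. -/
def bIdx0 (k : ℕ) (i : Fin k) : Fin (2 * k) := ⟨2 * (i : ℕ), by have := i.isLt; omega⟩

def bIdx1 (k : ℕ) (i : Fin k) : Fin (2 * k) := ⟨2 * (i : ℕ) + 1, by have := i.isLt; omega⟩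

lemma bIdx_ne (k : ℕ) (i : Fin k) : bIdx0 k i ≠ bIdx1 k i := by
  simp only [bIdx0, bIdx1, ne_eq, Fin.mk.injEq]
  omega

/-- The matrix `B_i = e_{2i-1,2i}(1) e_{2i,2i-1}(-1) e_{2i-1,2i}(1) e_{2i,2i-1}(-1)`
(1-indexed) in `E_{2k}(R)`. -/
def Bmat (k : ℕ) (i : Fin k) : (Matrix (Fin (2 * k)) (Fin (2 * k)) R)ˣ :=
  elemGL R (2 * k) (bIdx0 k i) (bIdx1 k i) (bIdx_ne k i) 1 *
  elemGL R (2 * k) (bIdx1 k i) (bIdx0 k i) (bIdx_ne k i).symm (-1) *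
  elemGL R (2 * k) (bIdx0 k i) (bIdx1 k i) (bIdx_ne k i) 1 *
  elemGL R (2 * k) (bIdx1 k i) (bIdx0 k i) (bIdx_ne k i).symm (-1)

end Extra

section SymplecticExtra

variable (S : Type*) [CommRing S]

def cIdx0 (n : ℕ) (i : Fin n) : Fin (2 * n) := ⟨(i : ℕ), by have := i.isLt; omega⟩

def cIdx1 (n : ℕ) (i : Fin n) : Fin (2 * n) := ⟨n + (i : ℕ), by have := i.isLt; omega⟩

lemma cIdx_ne (n : ℕ) (i : Fin n) : cIdx0 n i ≠ cIdx1 n i := by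
  have := i.pos
  simp only [cIdx0, cIdx1, ne_eq, Fin.mk.injEq]
  omega

/-- The matrix `C_i = ρ_{i,n+i}(1) ρ_{n+i,i}(-1) ρ_{i,n+i}(1) ρ_{n+i,i}(-1)` in
`Sp_{2n}(S)`. -/
def Cmat (n : ℕ) (i : Fin n) : (Matrix (Fin (2 * n)) (Fin (2 * n)) S)ˣ :=
  symElemGL S n (cIdx0 n i) (cIdx1 n i) (cIdx_ne n i) 1 *
  symElemGL S n (cIdx1 n i) (cIdx0 n i) (cIdx_ne n i).symm (-1) *
  symElemGL S n (cIdx0 n i) (cIdx1 n i) (cIdx_ne n i) 1 *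
  symElemGL S n (cIdx1 n i) (cIdx0 n i) (cIdx_ne n i).symm (-1)

/-- The equivalence `Fin n ⊕ Fin n ≃ Fin (2 * n)`. -/
def finDouble (n : ℕ) : Fin n ⊕ Fin n ≃ Fin (2 * n) :=
  finSumFinEquiv.trans (finCongr (two_mul n).symm)

/-- The block-diagonal matrix `diag(A, B)` as a `2n × 2n` matrix. -/
def blockDiag2 (n : ℕ) (A B : Matrix (Fin n) (Fin n) S) :
    Matrix (Fin (2 * n)) (Fin (2 * n)) S :=
  Matrix.reindex (finDouble n) (finDouble n) (Matrix.fromBlocks A 0 0 B)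

lemma blockDiag2_mul (n : ℕ) (A B A' B' : Matrix (Fin n) (Fin n) S) :
    blockDiag2 S n A B * blockDiag2 S n A' B' = blockDiag2 S n (A * A') (B * B') := by
  unfold blockDiag2
  rw [Matrix.reindex_apply, Matrix.reindex_apply, Matrix.reindex_apply,
    Matrix.submatrix_mul_equiv, Matrix.fromBlocks_multiply]
  simp

lemma blockDiag2_one (n : ℕ) : blockDiag2 S n 1 1 = 1 := by
  unfold blockDiag2
  rw [Matrix.reindex_apply, Matrix.fromBlocks_one, Matrix.submatrix_one_equiv]

/-- The hyperbolic embedding `A ↦ diag(A, (Aᵀ)⁻¹) = diag(A, (A⁻¹)ᵀ)` from `GL_n(S)`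
to `GL_{2n}(S)`. -/
def hypGL (n : ℕ) (A : (Matrix (Fin n) (Fin n) S)ˣ) :
    (Matrix (Fin (2 * n)) (Fin (2 * n)) S)ˣ where
  val := blockDiag2 S n ↑A ((↑(A⁻¹) : Matrix (Fin n) (Fin n) S)ᵀ)
  inv := blockDiag2 S n ↑(A⁻¹) ((↑A : Matrix (Fin n) (Fin n) S)ᵀ)
  val_inv := by
    rw [blockDiag2_mul, ← Matrix.transpose_mul, A.mul_inv, Matrix.transpose_one,
      blockDiag2_one]
  inv_val := by
    rw [blockDiag2_mul, ← Matrix.transpose_mul, A.inv_mul, Matrix.transpose_one,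
      blockDiag2_one]

end SymplecticExtra


section Statement6Aux

variable (R : Type*) [Ring R]

lemma sbm_neg (n : ℕ) (i j : Fin n) (a : R) :
    single i j (-a) = - single i j a := by
  ext x y; simp [single]; split <;> simp

lemma elemGL_comm (n : ℕ) (i m j : Fin n) (him : i ≠ m) (hmj : m ≠ j) (hij : i ≠ j)
    (r s : R) :
    elemGL R n i j hij (r * s) =
      elemGL R n i m him r * elemGL R n m j hmj s *
      elemGL R n i m him (-r) * elemGL R n m j hmj (-s) := by
  apply Units.ext
  show (1 + single i j (r * s)) =
    (1 + single i m r) * (1 + single m j s) *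
    (1 + single i m (-r)) * (1 + single m j (-s))
  have hmi : m ≠ i := him.symm
  have hjm : j ≠ m := hmj.symm
  have hji : j ≠ i := hij.symm
  simp only [mul_add, add_mul, mul_one, one_mul, sbm_neg, mul_neg, neg_mul, neg_neg,
    Matrix.single_mul_single_same,
    Matrix.single_mul_single_of_ne _ _ _ _ hmi,
    Matrix.single_mul_single_of_ne _ _ _ _ hjm,
    Matrix.single_mul_single_of_ne _ _ _ _ hji,
    zero_mul, mul_zero, neg_zero, add_zero, zero_add]
  abel

/-- The generating set of statement 6. -/
def genSet6 (n : ℕ) : Set (Matrix (Fin n) (Fin n) R)ˣ :=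
  { A : (Matrix (Fin n) (Fin n) R)ˣ |
      ∃ (i j : Fin n) (hij : i ≠ j) (r : R), (j : ℕ) = (i : ℕ) + 1 ∧
        A = elemGL R n i j hij r } ∪
  { A : (Matrix (Fin n) (Fin n) R)ˣ |
      ∃ (i j : Fin n) (hij : i ≠ j) (r : R), (i : ℕ) = n - 1 ∧ (j : ℕ) = 0 ∧
        A = elemGL R n i j hij r }

lemma base1_mem (n : ℕ) (i j : Fin n) (hij : i ≠ j) (r : R)
    (hd : (j : ℕ) = (i : ℕ) + 1 ∨ (j : ℕ) + n = (i : ℕ) + 1) :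
    elemGL R n i j hij r ∈ Subgroup.closure (genSet6 R n) := by
  have hi := i.isLt
  have hj := j.isLt
  apply Subgroup.subset_closure
  rcases hd with hd | hd
  · exact Or.inl ⟨i, j, hij, r, hd, rfl⟩
  · exact Or.inr ⟨i, j, hij, r, by omega, by omega, rfl⟩

lemma dist_mem (n : ℕ) (hn : 3 ≤ n) :
    ∀ d : ℕ, 1 ≤ d → d < n → ∀ (i j : Fin n) (hij : i ≠ j) (r : R),
      ((j : ℕ) = (i : ℕ) + d ∨ (j : ℕ) + n = (i : ℕ) + d) →
      elemGL R n i j hij r ∈ Subgroup.closure (genSet6 R n) := by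
  intro d hd1
  induction d, hd1 using Nat.le_induction with
  | base =>
    intro _ i j hij r hd
    exact base1_mem R n i j hij r hd
  | succ d hd1 IH =>
    intro hdn i j hij r hd
    have hi := i.isLt
    have hj := j.isLt
    by_cases hc : (i : ℕ) + 1 < n
    · set m : Fin n := ⟨(i : ℕ) + 1, hc⟩ with hm
      have him : i ≠ m := by
        intro h; have := congrArg Fin.val h; simp only [hm] at this; omega
      have hmj : m ≠ j := by
        intro h; have := congrArg Fin.val h; simp only [hm] at this; omega
      have h1 : elemGL R n i m him r ∈ Subgroup.closure (genSet6 R n) :=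
        base1_mem R n i m him r (Or.inl rfl)
      have h1' : elemGL R n i m him (-r) ∈ Subgroup.closure (genSet6 R n) :=
        base1_mem R n i m him (-r) (Or.inl rfl)
      have h2 : elemGL R n m j hmj 1 ∈ Subgroup.closure (genSet6 R n) :=
        IH (by omega) m j hmj 1 (by simp only [hm]; omega)
      have h2' : elemGL R n m j hmj (-1) ∈ Subgroup.closure (genSet6 R n) :=
        IH (by omega) m j hmj (-1) (by simp only [hm]; omega)
      have key := elemGL_comm R n i m j him hmj hij r 1
      rw [mul_one] at key
      rw [key]
      exact mul_mem (mul_mem (mul_mem h1 h2) h1') h2'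
    · set m : Fin n := ⟨0, by omega⟩ with hm
      have him : i ≠ m := by
        intro h; have := congrArg Fin.val h; simp only [hm] at this; omega
      have hmj : m ≠ j := by
        intro h; have := congrArg Fin.val h; simp only [hm] at this; omega
      have h1 : elemGL R n i m him r ∈ Subgroup.closure (genSet6 R n) :=
        base1_mem R n i m him r (Or.inr (by simp only [hm]; omega))
      have h1' : elemGL R n i m him (-r) ∈ Subgroup.closure (genSet6 R n) :=
        base1_mem R n i m him (-r) (Or.inr (by simp only [hm]; omega))
      have h2 : elemGL R n m j hmj 1 ∈ Subgroup.closure (genSet6 R n) :=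
        IH (by omega) m j hmj 1 (by simp only [hm]; omega)
      have h2' : elemGL R n m j hmj (-1) ∈ Subgroup.closure (genSet6 R n) :=
        IH (by omega) m j hmj (-1) (by simp only [hm]; omega)
      have key := elemGL_comm R n i m j him hmj hij r 1
      rw [mul_one] at key
      rw [key]
      exact mul_mem (mul_mem (mul_mem h1 h2) h1') h2'

end Statement6Aux

/-- For `n ≥ 3`, `E_n(R)` is generated by the superdiagonal elementary
matrices `e_{i,i+1}(r)` together with the elementary matrices `e_{n,1}(r)` (1-indexed;
0-indexed these are positions `(n-1, 0)`). -/
theorem statement6 (R : Type*) [Ring R] (n : ℕ) (hn : 3 ≤ n) :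
    Subgroup.closure
      ({ A : (Matrix (Fin n) (Fin n) R)ˣ |
          ∃ (i j : Fin n) (hij : i ≠ j) (r : R), (j : ℕ) = (i : ℕ) + 1 ∧
            A = elemGL R n i j hij r } ∪
       { A : (Matrix (Fin n) (Fin n) R)ˣ |
          ∃ (i j : Fin n) (hij : i ≠ j) (r : R), (i : ℕ) = n - 1 ∧ (j : ℕ) = 0 ∧
            A = elemGL R n i j hij r }) = ElementaryGroup R n := by
  have hS : ({ A : (Matrix (Fin n) (Fin n) R)ˣ |
          ∃ (i j : Fin n) (hij : i ≠ j) (r : R), (j : ℕ) = (i : ℕ) + 1 ∧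
            A = elemGL R n i j hij r } ∪
       { A : (Matrix (Fin n) (Fin n) R)ˣ |
          ∃ (i j : Fin n) (hij : i ≠ j) (r : R), (i : ℕ) = n - 1 ∧ (j : ℕ) = 0 ∧
            A = elemGL R n i j hij r }) = genSet6 R n := rfl
  rw [hS]
  apply le_antisymm
  · rw [Subgroup.closure_le]
    rintro A (⟨i, j, hij, r, -, rfl⟩ | ⟨i, j, hij, r, -, -, rfl⟩) <;>
      exact elemGL_mem R n i j hij r
  · rw [ElementaryGroup, Subgroup.closure_le]
    rintro A ⟨i, j, hij, r, rfl⟩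
    have hi := i.isLt
    have hj := j.isLt
    have hne : (i : ℕ) ≠ (j : ℕ) := fun h => hij (Fin.ext h)
    by_cases hc : (i : ℕ) < (j : ℕ)
    · exact dist_mem R n hn ((j : ℕ) - (i : ℕ)) (by omega) (by omega) i j hij r
        (Or.inl (by omega))
    · exact dist_mem R n hn ((j : ℕ) + n - (i : ℕ)) (by omega) (by omega) i j hij r
        (Or.inr (by omega))

end Paper
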